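/- Let Ω be a finite set and m ≥ 2. Suppose f : P^m → Pow(Ω) is an m-agent event selector that is strategy-proof (p_i(f(p)) ≥ p_i(f(p'_i, p_{−i})) for all profiles p, agents i, and deviations p'_i) and whose range contains three events E₁, E₂, E₃ with the property that for each of the six strict orderings of {E₁,E₂,E₃} there is a belief π with π(E_{σ(1)}) > π(E_{σ(2)}) > π(E_{σ(3)}) > π(E) for every other event E in the range of f. If additionally whenever some agent's belief ranks one of E₁,E₂,E₃ strictly above all other range events, f selects an element of {E₁,E₂,E₃} when all agents report such beliefs, then f restricted to profiles of these six beliefs induces a surjective strategy-proof social choice function from orderings of a 3-element set, and hence (by the Gibbard–Satterthwaite theorem) f is not anonymous. -/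

import Mathlib

/-- A strictly positive, normalized, event-injective belief. -/
def IsBelief {Ω : Type*} [Fintype Ω] (r : Ω → ℝ) : Prop :=
  (∀ ω, 0 < r ω) ∧ (∑ ω, r ω = 1) ∧
  ∀ A B : Finset Ω, (∑ ω ∈ A, r ω) = (∑ ω ∈ B, r ω) → A = B

namespace Stmt15Aux

abbrev P3 := Equiv.Perm (Fin 3)

def pA : P3 := ⟨![0,1,2], ![0,1,2], by decide, by decide⟩
def pB : P3 := ⟨![1,0,2], ![1,0,2], by decide, by decide⟩
def pE : P3 := ⟨![1,2,0], ![2,0,1], by decide, by decide⟩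
def pC : P3 := ⟨![2,0,1], ![1,2,0], by decide, by decide⟩
def pD : P3 := ⟨![2,1,0], ![2,1,0], by decide, by decide⟩
def pF : P3 := ⟨![0,2,1], ![0,2,1], by decide, by decide⟩

/-- value `v` is frozen when a voter moves from report `σ` to report `τ`. -/
@[reducible] def Fz (σ τ : P3) (v : Fin 3) : Prop :=
  ∀ w : Fin 3, ¬(σ.symm v < σ.symm w ∧ τ.symm w < τ.symm v)

/-- An anonymous strategy-proof unanimous voting rule on 3 alternatives. -/
structure VS (m : ℕ) where
  g : (Fin m → P3) → Fin 3
  step : ∀ (L : Fin m → P3) (i : Fin m) (τ : P3),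
    g (Function.update L i τ) ≠ g L →
      (L i).symm (g L) < (L i).symm (g (Function.update L i τ)) ∧
      τ.symm (g (Function.update L i τ)) < τ.symm (g L)
  anon : ∀ (τ : Equiv.Perm (Fin m)) (L : Fin m → P3), g (L ∘ τ) = g L
  unam : ∀ σ : P3, g (fun _ => σ) = σ 0

def prof3 {m : ℕ} (σ₁ σ₂ σ₃ : P3) (x y : ℕ) : Fin m → P3 :=
  fun i => if (i : ℕ) < x then σ₁ else if (i : ℕ) < x + y then σ₂ else σ₃

def cnt {m : ℕ} (L : Fin m → P3) (ρ : P3) : ℕ :=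
  (Finset.univ.filter fun i => L i = ρ).card

lemma prof3_at1 {m : ℕ} {σ₁ σ₂ σ₃ : P3} {x y : ℕ} (i : Fin m) (h : (i : ℕ) < x) :
    prof3 σ₁ σ₂ σ₃ x y i = σ₁ := by
  simp only [prof3]; rw [if_pos h]

lemma prof3_at2 {m : ℕ} {σ₁ σ₂ σ₃ : P3} {x y : ℕ} (i : Fin m)
    (h1 : x ≤ (i : ℕ)) (h2 : (i : ℕ) < x + y) :
    prof3 σ₁ σ₂ σ₃ x y i = σ₂ := by
  simp only [prof3]; rw [if_neg (by omega), if_pos h2]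

lemma prof3_at3 {m : ℕ} {σ₁ σ₂ σ₃ : P3} {x y : ℕ} (i : Fin m) (h : x + y ≤ (i : ℕ)) :
    prof3 σ₁ σ₂ σ₃ x y i = σ₃ := by
  simp only [prof3]; rw [if_neg (by omega), if_neg (by omega)]

lemma upd12 {m : ℕ} {σ₁ σ₂ σ₃ : P3} {x y : ℕ} (h : x < m) :
    Function.update (prof3 σ₁ σ₂ σ₃ (x+1) y) ⟨x, h⟩ σ₂ = prof3 σ₁ σ₂ σ₃ x (y+1) := by
  funext i
  by_cases hi : i = ⟨x, h⟩
  · subst hi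
    rw [Function.update_self]
    exact (prof3_at2 _ (show x ≤ x from le_refl x) (show x < x + (y+1) by omega)).symm
  · rw [Function.update_of_ne hi]
    have hv : (i : ℕ) ≠ x := fun hv => hi (Fin.ext hv)
    simp only [prof3]
    split_ifs <;> first | rfl | omega

lemma upd21 {m : ℕ} {σ₁ σ₂ σ₃ : P3} {x y : ℕ} (h : x < m) :
    Function.update (prof3 σ₁ σ₂ σ₃ x (y+1)) ⟨x, h⟩ σ₁ = prof3 σ₁ σ₂ σ₃ (x+1) y := by
  funext i
  by_cases hi : i = ⟨x, h⟩
  · subst hi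
    rw [Function.update_self]
    exact (prof3_at1 _ (show x < x + 1 by omega)).symm
  · rw [Function.update_of_ne hi]
    have hv : (i : ℕ) ≠ x := fun hv => hi (Fin.ext hv)
    simp only [prof3]
    split_ifs <;> first | rfl | omega

lemma upd23 {m : ℕ} {σ₁ σ₂ σ₃ : P3} {x y : ℕ} (h : x + y < m) :
    Function.update (prof3 σ₁ σ₂ σ₃ x (y+1)) ⟨x+y, h⟩ σ₃ = prof3 σ₁ σ₂ σ₃ x y := by
  funext i
  by_cases hi : i = ⟨x+y, h⟩
  · subst hi
    rw [Function.update_self]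
    exact (prof3_at3 _ (show x + y ≤ x + y from le_refl _)).symm
  · rw [Function.update_of_ne hi]
    have hv : (i : ℕ) ≠ x + y := fun hv => hi (Fin.ext hv)
    simp only [prof3]
    split_ifs <;> first | rfl | omega

lemma upd32 {m : ℕ} {σ₁ σ₂ σ₃ : P3} {x y : ℕ} (h : x + y < m) :
    Function.update (prof3 σ₁ σ₂ σ₃ x y) ⟨x+y, h⟩ σ₂ = prof3 σ₁ σ₂ σ₃ x (y+1) := by
  funext i
  by_cases hi : i = ⟨x+y, h⟩
  · subst hi
    rw [Function.update_self]
    exact (prof3_at2 _ (show x ≤ x + y by omega) (show x + y < x + (y+1) by omega)).symm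
  · rw [Function.update_of_ne hi]
    have hv : (i : ℕ) ≠ x + y := fun hv => hi (Fin.ext hv)
    simp only [prof3]
    split_ifs <;> first | rfl | omega

lemma prof3_const1 {m : ℕ} {σ₁ σ₂ σ₃ : P3} {x y : ℕ} (h : m ≤ x) :
    prof3 (m := m) σ₁ σ₂ σ₃ x y = fun _ => σ₁ := by
  funext i; exact prof3_at1 _ (by omega)

lemma prof3_const2 {m : ℕ} {σ₁ σ₂ σ₃ : P3} {y : ℕ} (h : m ≤ y) :
    prof3 (m := m) σ₁ σ₂ σ₃ 0 y = fun _ => σ₂ := by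
  funext i; exact prof3_at2 _ (by omega) (by omega)

lemma prof3_third {m : ℕ} {σ₁ σ₂ σ₃ τ : P3} {x y : ℕ} (h : m ≤ x + y) :
    prof3 (m := m) σ₁ σ₂ σ₃ x y = prof3 σ₁ σ₂ τ x y := by
  funext i; simp only [prof3]; split_ifs <;> first | rfl | omega

lemma prof3_second {m : ℕ} {σ₁ σ₂ σ₃ τ : P3} {x : ℕ} :
    prof3 (m := m) σ₁ σ₂ σ₃ x 0 = prof3 σ₁ τ σ₃ x 0 := by
  funext i; simp only [prof3]; split_ifs <;> first | rfl | omega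

lemma prof3_first {m : ℕ} {σ₁ σ₂ σ₃ τ : P3} {y : ℕ} :
    prof3 (m := m) σ₁ σ₂ σ₃ 0 y = prof3 τ σ₂ σ₃ 0 y := by
  funext i; simp only [prof3]; split_ifs <;> first | rfl | omega

lemma cnt_prof3 {m : ℕ} (σ₁ σ₂ σ₃ ρ : P3) (x y : ℕ) (h : x + y ≤ m) :
    cnt (prof3 (m := m) σ₁ σ₂ σ₃ x y) ρ =
      (if σ₁ = ρ then x else 0) + (if σ₂ = ρ then y else 0) +
        (if σ₃ = ρ then m - (x + y) else 0) := by
  classical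
  unfold cnt
  rw [Finset.card_filter]
  show (∑ i : Fin m, if (if (i : ℕ) < x then σ₁ else if (i : ℕ) < x + y then σ₂ else σ₃) = ρ
    then 1 else 0) = _
  rw [Fin.sum_univ_eq_sum_range
    (fun j => if (if j < x then σ₁ else if j < x + y then σ₂ else σ₃) = ρ then 1 else 0) m]
  rw [Finset.range_eq_Ico,
    ← Finset.sum_Ico_consecutive _ (Nat.zero_le (x+y)) h,
    ← Finset.sum_Ico_consecutive _ (Nat.zero_le x) (Nat.le_add_right x y)]
  have e1 : ∑ i ∈ Finset.Ico 0 x,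
      (if (if i < x then σ₁ else if i < x + y then σ₂ else σ₃) = ρ then 1 else 0) =
      (if σ₁ = ρ then x else 0) := by
    rw [Finset.sum_congr rfl (g := fun _ => if σ₁ = ρ then 1 else 0)
      (fun i hi => by
        simp only [Finset.mem_Ico] at hi
        rw [if_pos (show i < x by omega)]),
      Finset.sum_const, Nat.card_Ico]
    split_ifs <;> simp
  have e2 : ∑ i ∈ Finset.Ico x (x+y),
      (if (if i < x then σ₁ else if i < x + y then σ₂ else σ₃) = ρ then 1 else 0) =
      (if σ₂ = ρ then y else 0) := by
    rw [Finset.sum_congr rfl (g := fun _ => if σ₂ = ρ then 1 else 0)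
      (fun i hi => by
        simp only [Finset.mem_Ico] at hi
        rw [if_neg (show ¬ i < x by omega), if_pos (show i < x + y by omega)]),
      Finset.sum_const, Nat.card_Ico]
    split_ifs <;> simp
  have e3 : ∑ i ∈ Finset.Ico (x+y) m,
      (if (if i < x then σ₁ else if i < x + y then σ₂ else σ₃) = ρ then 1 else 0) =
      (if σ₃ = ρ then m - (x+y) else 0) := by
    rw [Finset.sum_congr rfl (g := fun _ => if σ₃ = ρ then 1 else 0)
      (fun i hi => by
        simp only [Finset.mem_Ico] at hi
        rw [if_neg (show ¬ i < x by omega), if_neg (show ¬ i < x + y by omega)]),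
      Finset.sum_const, Nat.card_Ico]
    split_ifs <;> simp
  rw [e1, e2, e3]

lemma existsPermOfCounts {m : ℕ} (L L' : Fin m → P3) (h : ∀ ρ, cnt L ρ = cnt L' ρ) :
    ∃ τ : Equiv.Perm (Fin m), L ∘ τ = L' := by
  classical
  have hcard : ∀ ρ, Fintype.card {i // L' i = ρ} = Fintype.card {i // L i = ρ} := by
    intro ρ
    rw [Fintype.card_subtype, Fintype.card_subtype]
    exact (h ρ).symm
  let e : ∀ ρ : P3, {i // L' i = ρ} ≃ {i // L i = ρ} := fun ρ => Fintype.equivOfCardEq (hcard ρ)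
  refine ⟨(Equiv.sigmaFiberEquiv L').symm.trans
    ((Equiv.sigmaCongrRight e).trans (Equiv.sigmaFiberEquiv L)), ?_⟩
  funext i
  simp only [Function.comp_apply, Equiv.trans_apply, Equiv.sigmaFiberEquiv,
    Equiv.sigmaCongrRight, Equiv.coe_fn_mk, Equiv.coe_fn_symm_mk]
  exact (e (L' i) ⟨i, rfl⟩).2

namespace VS

variable {m : ℕ} (S : VS m)

lemma ganon (L L' : Fin m → P3) (h : ∀ ρ, cnt L ρ = cnt L' ρ) : S.g L = S.g L' := by
  obtain ⟨τ, hτ⟩ := existsPermOfCounts L L' h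
  rw [← hτ]
  exact (S.anon τ L).symm

lemma freeze {σ τ : P3} {v : Fin 3} (hfz : Fz σ τ v) (L : Fin m → P3) (i : Fin m)
    (hL : L i = σ) (hv : S.g L = v) : S.g (Function.update L i τ) = v := by
  by_contra hne
  have hst := S.step L i τ (by rw [hv]; exact hne)
  rw [hv, hL] at hst
  exact hfz _ hst

lemma chainDown2 {σ₁ σ₂ σ₃ : P3} {v : Fin 3} (hfz : Fz σ₂ σ₃ v) :
    ∀ (y x : ℕ), x + y ≤ m → S.g (prof3 σ₁ σ₂ σ₃ x y) = v →
      S.g (prof3 σ₁ σ₂ σ₃ x 0) = v := by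
  intro y
  induction y with
  | zero => intro x _ hv; exact hv
  | succ y ih =>
    intro x hxy hv
    refine ih x (by omega) ?_
    have hlt : x + y < m := by omega
    have := S.freeze hfz (prof3 σ₁ σ₂ σ₃ x (y+1)) ⟨x+y, hlt⟩
      (prof3_at2 _ (show x ≤ x + y by omega) (show x + y < x + (y+1) by omega)) hv
    rwa [upd23 hlt] at this

lemma chainUp2aux {σ₁ σ₂ σ₃ : P3} {v : Fin 3} (hfz : Fz σ₃ σ₂ v) :
    ∀ (d x y : ℕ), x + y + d = m → S.g (prof3 σ₁ σ₂ σ₃ x y) = v →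
      S.g (prof3 σ₁ σ₂ σ₃ x (y + d)) = v := by
  intro d
  induction d with
  | zero => intro x y _ hv; exact hv
  | succ d ih =>
    intro x y hsum hv
    have hlt : x + y < m := by omega
    have h1 : S.g (prof3 σ₁ σ₂ σ₃ x (y+1)) = v := by
      have := S.freeze hfz (prof3 σ₁ σ₂ σ₃ x y) ⟨x+y, hlt⟩
        (prof3_at3 _ (show x + y ≤ x + y from le_refl _)) hv
      rwa [upd32 hlt] at this
    have := ih x (y+1) (by omega) h1
    have e : y + 1 + d = y + (d + 1) := by omega
    rwa [e] at this

lemma chainUp2 {σ₁ σ₂ σ₃ : P3} {v : Fin 3} (hfz : Fz σ₃ σ₂ v)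
    (x y : ℕ) (hxy : x + y ≤ m) (hv : S.g (prof3 σ₁ σ₂ σ₃ x y) = v) :
    S.g (prof3 σ₁ σ₂ σ₃ x (m - x)) = v := by
  have := S.chainUp2aux hfz (m - (x+y)) x y (by omega) hv
  have e : y + (m - (x + y)) = m - x := by omega
  rwa [e] at this

lemma chainDown1 {σ₁ σ₂ σ₃ : P3} {v : Fin 3} (hfz : Fz σ₁ σ₂ v) :
    ∀ (x y : ℕ), x + y ≤ m → S.g (prof3 σ₁ σ₂ σ₃ x y) = v →
      S.g (prof3 σ₁ σ₂ σ₃ 0 (x + y)) = v := by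
  intro x
  induction x with
  | zero => intro y _ hv; simpa using hv
  | succ x ih =>
    intro y hxy hv
    have hlt : x < m := by omega
    have h1 : S.g (prof3 σ₁ σ₂ σ₃ x (y+1)) = v := by
      have := S.freeze hfz (prof3 σ₁ σ₂ σ₃ (x+1) y) ⟨x, hlt⟩
        (prof3_at1 _ (show x < x + 1 by omega)) hv
      rwa [upd12 hlt] at this
    have := ih (y+1) (by omega) h1
    have e : x + (y + 1) = x + 1 + y := by omega
    rwa [e] at this

lemma chainUp1 {σ₁ σ₂ σ₃ : P3} {v : Fin 3} (hfz : Fz σ₂ σ₁ v) :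
    ∀ (y x : ℕ), x + y ≤ m → S.g (prof3 σ₁ σ₂ σ₃ x y) = v →
      S.g (prof3 σ₁ σ₂ σ₃ (x + y) 0) = v := by
  intro y
  induction y with
  | zero => intro x _ hv; simpa using hv
  | succ y ih =>
    intro x hxy hv
    have hlt : x < m := by omega
    have h1 : S.g (prof3 σ₁ σ₂ σ₃ (x+1) y) = v := by
      have := S.freeze hfz (prof3 σ₁ σ₂ σ₃ x (y+1)) ⟨x, hlt⟩
        (prof3_at2 _ (show x ≤ x from le_refl _) (show x < x + (y+1) by omega)) hv
      rwa [upd21 hlt] at this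
    have := ih (x+1) (by omega) h1
    have e : x + 1 + y = x + (y + 1) := by omega
    rwa [e] at this

lemma swap12 {σ₁ σ₂ σ₃ : P3} (x y : ℕ) (h : x + y ≤ m) :
    S.g (prof3 σ₁ σ₂ σ₃ x y) = S.g (prof3 σ₂ σ₁ σ₃ y x) := by
  refine S.ganon _ _ (fun ρ => ?_)
  rw [cnt_prof3 _ _ _ _ _ _ h, cnt_prof3 _ _ _ _ _ _ (by omega)]
  split_ifs <;> omega

lemma rot {σ₁ σ₂ σ₃ : P3} (x y : ℕ) (h : x + y ≤ m) :
    S.g (prof3 σ₁ σ₂ σ₃ x y) = S.g (prof3 σ₂ σ₃ σ₁ y (m - (x + y))) := by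
  refine S.ganon _ _ (fun ρ => ?_)
  rw [cnt_prof3 _ _ _ _ _ _ h, cnt_prof3 _ _ _ _ _ _ (by omega)]
  split_ifs <;> omega

lemma edge (σ₁ σ₂ σ₃ : P3) (w : Fin 3)
    (hfzv : Fz σ₁ σ₂ (σ₂ 0)) (hfzw : Fz σ₁ σ₂ w)
    (hx : ∀ v : Fin 3, v = σ₁ 0 ∨ v = σ₂ 0 ∨ v = w)
    (hne : σ₁ 0 ≠ σ₂ 0) (hnw2 : w ≠ σ₂ 0) (hm : 1 ≤ m) :
    ∃ k, 1 ≤ k ∧ k ≤ m ∧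
      (∀ x j, x + j = m → j < k → S.g (prof3 σ₁ σ₂ σ₃ x j) = σ₁ 0) ∧
      (∀ x j, x + j = m → k ≤ j → S.g (prof3 σ₁ σ₂ σ₃ x j) = σ₂ 0) := by
  classical
  have hPm : m ≤ m ∧ S.g (prof3 (m := m) σ₁ σ₂ σ₃ (m - m) m) = σ₂ 0 := by
    refine ⟨le_refl m, ?_⟩
    rw [show m - m = 0 by omega, prof3_const2 (le_refl m), S.unam]
  have hEx : ∃ j, j ≤ m ∧ S.g (prof3 (m := m) σ₁ σ₂ σ₃ (m - j) j) = σ₂ 0 := ⟨m, hPm⟩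
  set k := Nat.find hEx with hkdef
  have hkspec := Nat.find_spec hEx
  have hkm : k ≤ m := Nat.find_le hPm
  have hk1 : 1 ≤ k := by
    rcases Nat.eq_zero_or_pos k with h0 | h1
    · exfalso
      have := hkspec
      rw [← hkdef] at this
      rw [h0] at this
      rw [show m - 0 = m by omega, prof3_const1 (le_refl m), S.unam] at this
      exact hne this.2
    · exact h1
  have nw : ∀ x j, x + j = m → S.g (prof3 σ₁ σ₂ σ₃ x j) ≠ w := by
    intro x j hxj hval
    have h2 := S.chainDown1 hfzw x j (by omega) hval
    rw [hxj, prof3_const2 (le_refl m), S.unam] at h2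
    exact hnw2 h2.symm
  have upper : ∀ j, k ≤ j → j ≤ m → S.g (prof3 (m := m) σ₁ σ₂ σ₃ (m - j) j) = σ₂ 0 := by
    intro j hkj
    induction j, hkj using Nat.le_induction with
    | base => intro _; exact hkspec.2
    | succ j hj ih =>
      intro hjm
      have hval := ih (by omega)
      have hlt : m - (j+1) < m := by omega
      have e : m - j = (m - (j+1)) + 1 := by omega
      rw [e] at hval
      have := S.freeze hfzv (prof3 σ₁ σ₂ σ₃ ((m-(j+1))+1) j) ⟨m-(j+1), hlt⟩
        (prof3_at1 _ (show m-(j+1) < m-(j+1)+1 by omega)) hval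
      rwa [upd12 hlt] at this
  refine ⟨k, hk1, hkm, ?_, ?_⟩
  · intro x j hxj hjk
    rcases hx (S.g (prof3 σ₁ σ₂ σ₃ x j)) with h0 | h1 | h2
    · exact h0
    · exfalso
      exact Nat.find_min hEx hjk ⟨by omega, by rw [show m - j = x by omega]; exact h1⟩
    · exact absurd h2 (nw x j hxj)
  · intro x j hxj hkj
    have := upper j hkj (by omega)
    rwa [show m - j = x by omega] at this

end VS

lemma fin3cases : ∀ v : Fin 3, v = 0 ∨ v = 1 ∨ v = 2 := by decide

namespace VS

theorem impossible {m : ℕ} (S : VS m) (hm : 2 ≤ m) : False := by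
  obtain ⟨k, hk1, hkm, kLo, kHi⟩ :=
    S.edge pA pE pC 2 (by decide) (by decide) (by decide) (by decide) (by decide) (by omega)
  obtain ⟨l, hl1, hlm, lLo, lHi⟩ :=
    S.edge pE pC pA 0 (by decide) (by decide) (by decide) (by decide) (by decide) (by omega)
  obtain ⟨n, hn1, hnm, nLo, nHi⟩ :=
    S.edge pC pA pE 1 (by decide) (by decide) (by decide) (by decide) (by decide) (by omega)
  -- requirement lemmas on A/E/C profiles
  have Ia : ∀ x y, x + y ≤ m → S.g (prof3 pA pE pC x y) = 0 → n ≤ x := by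
    intro x y hxy h0
    have h1 := S.chainDown2 (show Fz pE pC 0 by decide) y x hxy h0
    have h2 := S.rot (σ₁ := pA) (σ₂ := pE) (σ₃ := pC) x 0 (by omega)
    rw [show m - (x + 0) = m - x by omega] at h2
    have h3 := S.rot (σ₁ := pE) (σ₂ := pC) (σ₃ := pA) 0 (m - x) (by omega)
    rw [show m - (0 + (m - x)) = x by omega] at h3
    have h4 : S.g (prof3 pC pA pE (m - x) x) = 0 := by rw [← h3, ← h2]; exact h1
    by_contra hnx
    have hc := nLo (m - x) x (by omega) (by omega)
    rw [h4] at hc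
    exact absurd hc (by decide)
  have Ib : ∀ x y, x + y ≤ m → S.g (prof3 pA pE pC x y) = 1 → k ≤ y := by
    intro x y hxy h1
    have h2 := S.swap12 (σ₁ := pA) (σ₂ := pE) (σ₃ := pC) x y hxy
    have h3 : S.g (prof3 pE pA pC y x) = 1 := by rw [← h2]; exact h1
    have h4 := S.chainUp2 (show Fz pC pA 1 by decide) y x (by omega) h3
    have h5 := S.swap12 (σ₁ := pE) (σ₂ := pA) (σ₃ := pC) y (m - y) (by omega)
    have h6 : S.g (prof3 pA pE pC (m - y) y) = 1 := by rw [← h5]; exact h4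
    by_contra hky
    have hc := kLo (m - y) y (by omega) (by omega)
    rw [h6] at hc
    exact absurd hc (by decide)
  have Ic : ∀ x y, x + y ≤ m → S.g (prof3 pA pE pC x y) = 2 → l ≤ m - (x + y) := by
    intro x y hxy h2v
    have h1 := S.chainDown1 (show Fz pA pE 2 by decide) x y hxy h2v
    have h2 := S.rot (σ₁ := pA) (σ₂ := pE) (σ₃ := pC) 0 (x + y) (by omega)
    rw [show m - (0 + (x + y)) = m - (x + y) by omega] at h2
    have h3 : S.g (prof3 pE pC pA (x + y) (m - (x + y))) = 2 := by rw [← h2]; exact h1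
    by_contra hl
    have hc := lLo (x + y) (m - (x + y)) (by omega) (by omega)
    rw [h3] at hc
    exact absurd hc (by decide)
  -- R1 : m < k + l
  have R1 : m < k + l := by
    by_contra hkl
    obtain ⟨x₀, hx₀⟩ : ∃ x₀, x₀ + k = m := ⟨m - k, by omega⟩
    have h0 : S.g (prof3 pA pE pC x₀ k) = 1 := by
      have := kHi x₀ k hx₀ (le_refl k)
      rwa [show pE 0 = (1 : Fin 3) from by decide] at this
    rw [prof3_third (τ := pB) (show m ≤ x₀ + k by omega)] at h0
    have h2 := S.chainDown2 (show Fz pE pB 1 by decide) k x₀ (by omega) h0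
    rw [prof3_second (τ := pF)] at h2
    rcases fin3cases (S.g (prof3 pA pF pB 0 x₀)) with h | h | h
    · have hc := S.chainUp1 (show Fz pF pA 0 by decide) x₀ 0 (by omega) h
      rw [show 0 + x₀ = x₀ by omega] at hc
      exact absurd (hc.symm.trans h2) (by decide)
    · rw [prof3_first (τ := pC)] at h
      have h6 := S.chainUp1 (show Fz pF pC 1 by decide) x₀ 0 (by omega) h
      rw [show 0 + x₀ = x₀ by omega] at h6
      rw [prof3_second (τ := pE)] at h6
      have h8 := S.chainUp2 (show Fz pB pE 1 by decide) x₀ 0 (by omega) h6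
      rw [show m - x₀ = k by omega] at h8
      have h9 := S.swap12 (σ₁ := pC) (σ₂ := pE) (σ₃ := pB) x₀ k (by omega)
      have h10 : S.g (prof3 pE pC pB k x₀) = 1 := by rw [← h9]; exact h8
      rw [prof3_third (τ := pA) (show m ≤ k + x₀ by omega)] at h10
      have hc := lHi k x₀ (by omega) (by omega)
      rw [h10] at hc
      exact absurd hc (by decide)
    · have hc := S.chainUp2 (show Fz pB pF 2 by decide) 0 x₀ (by omega) h
      rw [show m - 0 = m by omega, prof3_const2 (le_refl m), S.unam] at hc
      exact absurd hc (by decide)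
  -- R2 : m < l + n
  have R2 : m < l + n := by
    by_contra hln
    obtain ⟨x₁, hx₁⟩ : ∃ x₁, x₁ + l = m := ⟨m - l, by omega⟩
    have h0 : S.g (prof3 pE pC pA x₁ l) = 2 := by
      have := lHi x₁ l hx₁ (le_refl l)
      rwa [show pC 0 = (2 : Fin 3) from by decide] at this
    rw [prof3_third (τ := pD) (show m ≤ x₁ + l by omega)] at h0
    have h2 := S.chainDown2 (show Fz pC pD 2 by decide) l x₁ (by omega) h0
    rw [prof3_second (τ := pB)] at h2
    rcases fin3cases (S.g (prof3 pE pB pD 0 x₁)) with h | h | h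
    · have hc := S.chainUp2 (show Fz pD pB 0 by decide) 0 x₁ (by omega) h
      rw [show m - 0 = m by omega, prof3_const2 (le_refl m), S.unam] at hc
      exact absurd hc (by decide)
    · have hc := S.chainUp1 (show Fz pB pE 1 by decide) x₁ 0 (by omega) h
      rw [show 0 + x₁ = x₁ by omega] at hc
      exact absurd (hc.symm.trans h2) (by decide)
    · rw [prof3_first (τ := pA)] at h
      have h6 := S.chainUp1 (show Fz pB pA 2 by decide) x₁ 0 (by omega) h
      rw [show 0 + x₁ = x₁ by omega] at h6
      rw [prof3_second (τ := pC)] at h6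
      have h8 := S.chainUp2 (show Fz pD pC 2 by decide) x₁ 0 (by omega) h6
      rw [show m - x₁ = l by omega] at h8
      have h9 := S.swap12 (σ₁ := pA) (σ₂ := pC) (σ₃ := pD) x₁ l (by omega)
      have h10 : S.g (prof3 pC pA pD l x₁) = 2 := by rw [← h9]; exact h8
      rw [prof3_third (τ := pE) (show m ≤ l + x₁ by omega)] at h10
      have hc := nHi l x₁ (by omega) (by omega)
      rw [h10] at hc
      exact absurd hc (by decide)
  -- R3 : m < n + k
  have R3 : m < n + k := by
    by_contra hnk
    obtain ⟨x₂, hx₂⟩ : ∃ x₂, x₂ + n = m := ⟨m - n, by omega⟩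
    have h0 : S.g (prof3 pC pA pE x₂ n) = 0 := by
      have := nHi x₂ n hx₂ (le_refl n)
      rwa [show pA 0 = (0 : Fin 3) from by decide] at this
    rw [prof3_third (τ := pF) (show m ≤ x₂ + n by omega)] at h0
    have h2 := S.chainDown2 (show Fz pA pF 0 by decide) n x₂ (by omega) h0
    rw [prof3_second (τ := pD)] at h2
    rcases fin3cases (S.g (prof3 pC pD pF 0 x₂)) with h | h | h
    · rw [prof3_first (τ := pE)] at h
      have h6 := S.chainUp1 (show Fz pD pE 0 by decide) x₂ 0 (by omega) h
      rw [show 0 + x₂ = x₂ by omega] at h6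
      rw [prof3_second (τ := pA)] at h6
      have h8 := S.chainUp2 (show Fz pF pA 0 by decide) x₂ 0 (by omega) h6
      rw [show m - x₂ = n by omega] at h8
      have h9 := S.swap12 (σ₁ := pE) (σ₂ := pA) (σ₃ := pF) x₂ n (by omega)
      have h10 : S.g (prof3 pA pE pF n x₂) = 0 := by rw [← h9]; exact h8
      rw [prof3_third (τ := pC) (show m ≤ n + x₂ by omega)] at h10
      have hc := kHi n x₂ (by omega) (by omega)
      rw [h10] at hc
      exact absurd hc (by decide)
    · have hc := S.chainUp2 (show Fz pF pD 1 by decide) 0 x₂ (by omega) h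
      rw [show m - 0 = m by omega, prof3_const2 (le_refl m), S.unam] at hc
      exact absurd hc (by decide)
    · have hc := S.chainUp1 (show Fz pD pC 2 by decide) x₂ 0 (by omega) h
      rw [show 0 + x₂ = x₂ by omega] at hc
      exact absurd (hc.symm.trans h2) (by decide)
  -- final contradiction
  have hsum : m + 3 ≤ k + l + n := by omega
  set x := min (n - 1) m with hxdef
  set y := min (k - 1) (m - x) with hydef
  have hxys : x + y ≤ m := by omega
  rcases fin3cases (S.g (prof3 pA pE pC x y)) with h | h | h
  · have := Ia x y hxys h; omega
  · have := Ib x y hxys h; omega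
  · have := Ic x y hxys h; omega

end VS

end Stmt15Aux

/-- A strategy-proof event selector whose range contains a top triple is not
anonymous (via the Gibbard–Satterthwaite theorem). -/
theorem stmt15 {Ω : Type*} [Fintype Ω] [DecidableEq Ω] (m : ℕ) (hm : 2 ≤ m)
    (f : (Fin m → (Ω → ℝ)) → Finset Ω)
    (hSP : ∀ p : Fin m → (Ω → ℝ), (∀ i, IsBelief (p i)) →
      ∀ (i : Fin m) (p' : Ω → ℝ), IsBelief p' →
        ∑ ω ∈ f (Function.update p i p'), p i ω ≤ ∑ ω ∈ f p, p i ω)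
    (E : Fin 3 → Finset Ω)
    (hErange : ∀ t : Fin 3, ∃ p, (∀ i, IsBelief (p i)) ∧ f p = E t)
    (π : Equiv.Perm (Fin 3) → (Ω → ℝ))
    (hπvalid : ∀ σ, IsBelief (π σ))
    (hπ : ∀ σ : Equiv.Perm (Fin 3),
      (∑ ω ∈ E (σ 1), π σ ω) < (∑ ω ∈ E (σ 0), π σ ω) ∧
      (∑ ω ∈ E (σ 2), π σ ω) < (∑ ω ∈ E (σ 1), π σ ω) ∧
      ∀ G : Finset Ω, (∃ p, (∀ i, IsBelief (p i)) ∧ f p = G) → G ∉ Set.range E →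
        (∑ ω ∈ G, π σ ω) < ∑ ω ∈ E (σ 2), π σ ω)
    (htop : ∀ p : Fin m → (Ω → ℝ), (∀ i, ∃ σ : Equiv.Perm (Fin 3), p i = π σ) →
      f p ∈ Set.range E) :
    ¬ (∀ (σ : Equiv.Perm (Fin m)) (p : Fin m → (Ω → ℝ)), (∀ i, IsBelief (p i)) →
        f (fun i => p (σ i)) = f p) := by
  intro hanon
  classical
  -- injectivity of E
  have hEinj : Function.Injective E := by
    have h01 := (hπ 1).1
    have h12 := (hπ 1).2.1
    simp only [Equiv.Perm.one_apply] at h01 h12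
    intro s t hst
    have hSf : (∑ ω ∈ E s, π 1 ω) = ∑ ω ∈ E t, π 1 ω := by rw [hst]
    rcases Stmt15Aux.fin3cases s with rfl | rfl | rfl <;>
      rcases Stmt15Aux.fin3cases t with rfl | rfl | rfl <;>
      first | rfl | (exfalso; linarith)
  -- the induced rule on orderings
  have hex : ∀ L : Fin m → Equiv.Perm (Fin 3), ∃ t, f (fun i => π (L i)) = E t := by
    intro L
    obtain ⟨t, ht⟩ := htop (fun i => π (L i)) (fun i => ⟨L i, rfl⟩)
    exact ⟨t, ht.symm⟩
  choose g hg using hex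
  -- rank comparison lemma
  have hrank : ∀ (σ : Equiv.Perm (Fin 3)) (s t : Fin 3),
      (∑ ω ∈ E (σ s), π σ ω) ≤ (∑ ω ∈ E (σ t), π σ ω) → t ≤ s := by
    intro σ s t hle
    have h01 := (hπ σ).1
    have h12 := (hπ σ).2.1
    rcases Stmt15Aux.fin3cases s with rfl | rfl | rfl <;>
      rcases Stmt15Aux.fin3cases t with rfl | rfl | rfl <;>
      first | decide | (exfalso; linarith)
  have hbel : ∀ L : Fin m → Equiv.Perm (Fin 3), ∀ i, IsBelief ((fun j => π (L j)) i) :=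
    fun L i => hπvalid _
  have hupdc : ∀ (L : Fin m → Equiv.Perm (Fin 3)) (i : Fin m) (τ : Equiv.Perm (Fin 3)),
      (fun j => π (Function.update L i τ j)) = Function.update (fun j => π (L j)) i (π τ) := by
    intro L i τ
    funext j
    by_cases h : j = i
    · subst h; simp
    · simp [Function.update_of_ne h]
  -- strategy-proofness at the level of g
  have hSPg : ∀ (L : Fin m → Equiv.Perm (Fin 3)) (i : Fin m) (τ : Equiv.Perm (Fin 3)),
      (L i).symm (g L) ≤ (L i).symm (g (Function.update L i τ)) := by
    intro L i τ
    have h := hSP (fun j => π (L j)) (hbel L) i (π τ) (hπvalid τ)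
    rw [← hupdc L i τ] at h
    rw [hg L, hg (Function.update L i τ)] at h
    refine hrank (L i) ((L i).symm (g (Function.update L i τ))) ((L i).symm (g L)) ?_
    rw [Equiv.apply_symm_apply, Equiv.apply_symm_apply]
    exact h
  have hstep : ∀ (L : Fin m → Equiv.Perm (Fin 3)) (i : Fin m) (τ : Equiv.Perm (Fin 3)),
      g (Function.update L i τ) ≠ g L →
        (L i).symm (g L) < (L i).symm (g (Function.update L i τ)) ∧
        τ.symm (g (Function.update L i τ)) < τ.symm (g L) := by
    intro L i τ hne
    constructor
    · exact lt_of_le_of_ne (hSPg L i τ)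
        (fun hEq => hne (((L i).symm.injective hEq).symm))
    · have h2 := hSPg (Function.update L i τ) i (L i)
      rw [Function.update_idem, Function.update_eq_self, Function.update_self] at h2
      exact lt_of_le_of_ne h2 (fun hEq => hne (τ.symm.injective hEq))
  -- anonymity at the level of g
  have hanon' : ∀ (τ : Equiv.Perm (Fin m)) (L : Fin m → Equiv.Perm (Fin 3)),
      g (L ∘ τ) = g L := by
    intro τ L
    have h := hanon τ (fun i => π (L i)) (hbel L)
    have h2 : E (g (L ∘ τ)) = E (g L) := by
      rw [← hg (L ∘ τ), ← hg L]
      exact h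
    exact hEinj h2
  -- unanimity at the level of g
  have hunam : ∀ σ : Equiv.Perm (Fin 3), g (fun _ => σ) = σ 0 := by
    intro σ
    obtain ⟨p, hp, hfp⟩ := hErange (σ 0)
    have key : ∀ s : Finset (Fin m), f (fun i => if i ∈ s then π σ else p i) = E (σ 0) := by
      intro s
      induction s using Finset.induction_on with
      | empty => simpa using hfp
      | @insert i s hi ih =>
        have hins : (fun j => if j ∈ insert i s then π σ else p j)
            = Function.update (fun j => if j ∈ s then π σ else p j) i (π σ) := by
          funext j
          by_cases h : j = i
          · subst h; simp
          · rw [Function.update_of_ne h]; simp [Finset.mem_insert, h]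
        rw [hins]
        have hUbel : ∀ j, IsBelief
            (Function.update (fun j => if j ∈ s then π σ else p j) i (π σ) j) := by
          intro j
          by_cases h : j = i
          · subst h; rw [Function.update_self]; exact hπvalid σ
          · rw [Function.update_of_ne h]
            by_cases hjs : j ∈ s
            · rw [if_pos hjs]
              exact hπvalid σ
            · rw [if_neg hjs]
              exact hp j
        have hupd2 : Function.update
              (Function.update (fun j => if j ∈ s then π σ else p j) i (π σ)) i (p i)
            = (fun j => if j ∈ s then π σ else p j) := by
          rw [Function.update_idem]
          funext j
          by_cases h : j = i
          · subst h; rw [Function.update_self]; simp [hi]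
          · rw [Function.update_of_ne h]
        have hsp := hSP _ hUbel i (p i) (hp i)
        rw [hupd2, ih, Function.update_self] at hsp
        have hGrange : ∃ p', (∀ i, IsBelief (p' i)) ∧ f p'
            = f (Function.update (fun j => if j ∈ s then π σ else p j) i (π σ)) :=
          ⟨_, hUbel, rfl⟩
        by_cases hGE : f (Function.update (fun j => if j ∈ s then π σ else p j) i (π σ))
            ∈ Set.range E
        · obtain ⟨t, ht⟩ := hGE
          rw [← ht] at hsp ⊢
          have h0 : σ.symm t = 0 := le_antisymm
            (hrank σ 0 (σ.symm t) (by rw [Equiv.apply_symm_apply]; exact hsp))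
            (Fin.zero_le _)
          have hts : t = σ 0 := by rw [← h0, Equiv.apply_symm_apply]
          rw [hts]
        · exfalso
          have hlt := (hπ σ).2.2 _ hGrange hGE
          have h12 := (hπ σ).2.1
          have h01 := (hπ σ).1
          linarith
    have hconst : (fun i : Fin m => if i ∈ (Finset.univ : Finset (Fin m)) then π σ else p i)
        = fun _ => π σ := by
      funext j; simp
    have hkey := key Finset.univ
    rw [hconst] at hkey
    exact hEinj ((hg (fun _ => σ)).symm.trans hkey)
  exact Stmt15Aux.VS.impossible ⟨g, hstep, hanon', hunam⟩ hm
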